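/- Let F be a doubly-indexed family of complex numbers F_{m,n} defined for positive integers m,n such that F_{a,b} = F_{c,d} whenever ab = cd and gcd(a,b) = gcd(c,d). Then there exists a family of numbers F_k^{(s)} (indexed by positive integers s and k) such that F_k^{(1)} = F_{k,1} and for all positive m,n: F_{m,n} = \sum_{s | gcd(m,n)} (1/s) F_{mn/s^2}^{(s)}. -/

import Mathlib

open ArithmeticFunction in
/-- If `F a b` depends only on `(a*b, gcd a b)` for positive `a, b`, then there
exists a family `G s k` (the replicates `F_k^{(s)}`) with `G 1 k = F k 1` and
`F m n = ∑_{s | gcd(m,n)} (1/s) * G s (m*n/s^2)`. -/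
theorem stmt0 (F : ℕ → ℕ → ℂ)
    (hF : ∀ a b c d : ℕ, 0 < a → 0 < b → 0 < c → 0 < d →
      a * b = c * d → Nat.gcd a b = Nat.gcd c d → F a b = F c d) :
    ∃ G : ℕ → ℕ → ℂ,
      (∀ k : ℕ, 0 < k → G 1 k = F k 1) ∧
      (∀ m n : ℕ, 0 < m → 0 < n →
        F m n = ∑ s ∈ (Nat.gcd m n).divisors, (1 / (s : ℂ)) * G s (m * n / s ^ 2)) := by
  refine ⟨fun s k => (s : ℂ) * ∑ x ∈ s.divisorsAntidiagonal,
      (moebius x.1 : ℂ) * F (x.1 * s * k) x.2, ?_, ?_⟩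
  · intro k hk
    simp [Nat.divisorsAntidiagonal_one]
  · intro m n hm hn
    set g := Nat.gcd m n with hgdef
    have hg : 0 < g := Nat.gcd_pos_of_pos_left _ hm
    set N := m * n with hNdef
    have hN : 0 < N := Nat.mul_pos hm hn
    have hg2N : g ^ 2 ∣ N := by
      rw [sq]
      exact Nat.mul_dvd_mul (Nat.gcd_dvd_left m n) (Nat.gcd_dvd_right m n)
    have hgN : g ∣ N := dvd_trans (dvd_pow_self g two_ne_zero) hg2N
    -- Möbius inversion with fixed N
    have key : ∀ n' > 0, ∑ i ∈ n'.divisors,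
        (fun s => ∑ x ∈ s.divisorsAntidiagonal, (moebius x.1 : ℂ) * F (N / x.2) x.2) i
        = F (N / n') n' :=
      (sum_eq_iff_sum_mul_moebius_eq
        (f := fun s => ∑ x ∈ s.divisorsAntidiagonal, (moebius x.1 : ℂ) * F (N / x.2) x.2)
        (g := fun e => F (N / e) e)).mpr (fun n' _ => rfl)
    have keyg := key g hg
    have hFeq : F m n = F (N / g) g := by
      have hgg : g ∣ N / g := (Nat.dvd_div_iff_mul_dvd hgN).mpr (by rwa [← sq])
      refine hF m n (N / g) g hm hn (Nat.div_pos (Nat.le_of_dvd hN hgN) hg) hg ?_ ?_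
      · rw [Nat.div_mul_cancel hgN]
      · rw [Nat.gcd_eq_right hgg] -- gcd (N/g) g = g? check direction
    rw [hFeq, ← keyg]
    refine Finset.sum_congr rfl fun s hs => ?_
    have hsg : s ∣ g := Nat.dvd_of_mem_divisors hs
    have hs0 : 0 < s := Nat.pos_of_mem_divisors hs
    have hs2N : s ^ 2 ∣ N := dvd_trans (pow_dvd_pow_of_dvd hsg 2) hg2N
    obtain ⟨t, ht⟩ := hs2N
    have hNs2 : N / s ^ 2 = t := by rw [ht, Nat.mul_div_cancel_left _ (pow_pos hs0 2)]
    rw [hNs2, ← mul_assoc, one_div, inv_mul_cancel₀ (by exact_mod_cast hs0.ne'), one_mul]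
    refine Finset.sum_congr rfl fun x hx => ?_
    obtain ⟨hx1, hx0⟩ := Nat.mem_divisorsAntidiagonal.mp hx
    have hx2 : 0 < x.2 := Nat.pos_of_ne_zero fun h => by simp [h] at hx1; omega
    have : N / x.2 = x.1 * s * t := by
      rw [ht, ← hx1]
      have : x.1 * x.2 * (x.1 * x.2) * t = (x.1 * (x.1 * x.2) * t) * x.2 := by ring
      rw [sq, this, Nat.mul_div_cancel _ hx2]
    rw [this]
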